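/- Let E be a nonempty finite set, let (Π_i)_{i∈E} be Borel probability measures on ℝ, and let (ρ_i)_{i∈E} be strictly positive real numbers. Then the finite Borel measure Σ_{i∈E} ρ_i·Π_i satisfies condition (TO) if and only if for some (equivalently, every) κ > 0 one has ∫_κ^∞ x·(max_{i∈E} Π_i([x,∞))) / (1 + ∫_0^x ∫_y^∞ max_{i∈E} Π_i((−∞,−z]) dz dy) dx < ∞, where the integrand is interpreted as 0 at points x where the double integral in the denominator is infinite. -/

import Mathlib

open MeasureTheory Set

/-- The denominator in condition (TO): `1 + ∫_0^x ∫_y^∞ μ((−∞,−z]) dz dy`. -/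
noncomputable def TOden (μ : Measure ℝ) (x : ℝ) : ENNReal :=
  1 + ∫⁻ y in Ioc (0 : ℝ) x, ∫⁻ z in Ioi y, μ (Iic (-z))

/-- A Borel measure `μ` on `ℝ` satisfies condition (TO) at level `κ > 0` if
`∫_κ^∞ x·μ([x,∞)) / (1 + ∫_0^x ∫_y^∞ μ((−∞,−z]) dz dy) dx < ∞`; the `ENNReal`
division is `0` whenever the denominator is infinite. -/
def TOat (μ : Measure ℝ) (κ : ℝ) : Prop :=
  (∫⁻ x in Ioi κ, (ENNReal.ofReal x * μ (Ici x)) / TOden μ x) < ⊤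

/-- `μ` satisfies condition (TO) if it satisfies (TO) at some level `κ > 0`. -/
def TO (μ : Measure ℝ) : Prop := ∃ κ > (0 : ℝ), TOat μ κ

/-- The max-tail analogue of the (TO) integral at level `κ`:
`∫_κ^∞ x·(max_i Π_i([x,∞))) / (1 + ∫_0^x ∫_y^∞ max_i Π_i((−∞,−z]) dz dy) dx < ∞`,
division by an infinite denominator being interpreted as `0`. -/
def TOmaxAt {E : Type*} [Fintype E] (law : E → Measure ℝ) (κ : ℝ) : Prop :=
  (∫⁻ x in Ioi κ,
      (ENNReal.ofReal x * ⨆ i, law i (Ici x)) /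
        (1 + ∫⁻ y in Ioc (0 : ℝ) x, ∫⁻ z in Ioi y, ⨆ i, law i (Iic (-z)))) < ⊤


open MeasureTheory Set ENNReal

/-- Division comparison in `ℝ≥0∞`. -/
lemma ennreal_div_le_aux {a a' b b' k m : ℝ≥0∞} (ha : a ≤ k * a') (hb : m * b' ≤ b)
    (hm0 : m ≠ 0) (hm : m ≠ ⊤) : a / b ≤ (k / m) * (a' / b') := by
  calc a / b ≤ (k * a') / (m * b') := ENNReal.div_le_div ha hb
  _ = (k / m) * (a' / b') := by
      rw [div_eq_mul_inv, ENNReal.mul_inv (Or.inl hm0) (Or.inl hm),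
        div_eq_mul_inv, div_eq_mul_inv]
      ring

/-- If pointwise `f ≤ K * g` with `K ≠ ∞` and `∫ g < ∞`, then `∫ f < ∞`. -/
lemma lintegral_lt_top_of_le {α : Type*} {m : MeasurableSpace α} {μ : Measure α}
    {f g : α → ℝ≥0∞} {K : ℝ≥0∞} (hK : K ≠ ⊤) (h : ∀ x, f x ≤ K * g x)
    (hg : (∫⁻ x, g x ∂μ) < ⊤) : (∫⁻ x, f x ∂μ) < ⊤ := by
  calc (∫⁻ x, f x ∂μ) ≤ ∫⁻ x, K * g x ∂μ := lintegral_mono h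
  _ = K * ∫⁻ x, g x ∂μ := lintegral_const_mul' _ _ hK
  _ < ⊤ := ENNReal.mul_lt_top hK.lt_top hg

lemma TOat_iff_TOmaxAt {E : Type*} [Fintype E] [Nonempty E] (law : E → Measure ℝ)
    (ρ : E → ℝ) (hρ : ∀ i, 0 < ρ i) (κ : ℝ) :
    TOat (∑ i, ENNReal.ofReal (ρ i) • law i) κ ↔ TOmaxAt law κ := by
  set μ : Measure ℝ := ∑ i, ENNReal.ofReal (ρ i) • law i with hμ
  have hμs : ∀ s : Set ℝ, μ s = ∑ i, ENNReal.ofReal (ρ i) * law i s := by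
    intro s
    simp [hμ, Measure.coe_finset_sum, Finset.sum_apply, Measure.smul_apply, smul_eq_mul]
  set c : ℝ≥0∞ := ENNReal.ofReal (Finset.univ.inf' Finset.univ_nonempty ρ) with hc
  have hc0 : c ≠ 0 := by
    have : (0:ℝ) < Finset.univ.inf' Finset.univ_nonempty ρ :=
      (Finset.lt_inf'_iff _).mpr fun i _ => hρ i
    exact (ENNReal.ofReal_pos.mpr this).ne'
  have hctop : c ≠ ⊤ := ENNReal.ofReal_ne_top
  have hcle : ∀ i, c ≤ ENNReal.ofReal (ρ i) := fun i =>
    ENNReal.ofReal_le_ofReal (Finset.inf'_le _ (Finset.mem_univ i))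
  set C : ℝ≥0∞ := ∑ i, ENNReal.ofReal (ρ i) with hC
  have hCtop : C ≠ ⊤ := (ENNReal.sum_lt_top.mpr fun i _ => ENNReal.ofReal_lt_top).ne
  -- measure comparisons
  have hlow : ∀ s : Set ℝ, c * (⨆ i, law i s) ≤ μ s := by
    intro s
    rw [ENNReal.mul_iSup]
    refine iSup_le fun i => ?_
    calc c * law i s ≤ ENNReal.ofReal (ρ i) * law i s := mul_le_mul_left (hcle i) _
    _ ≤ μ s := by
        rw [hμs]
        exact Finset.single_le_sum (f := fun j => ENNReal.ofReal (ρ j) * law j s)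
          (fun j _ => zero_le) (Finset.mem_univ i)
  have hupp : ∀ s : Set ℝ, μ s ≤ C * (⨆ i, law i s) := by
    intro s
    rw [hμs, hC, Finset.sum_mul]
    exact Finset.sum_le_sum fun i _ => mul_le_mul_right (le_iSup (fun j => law j s) i) _
  -- inner double integrals
  set I : ℝ → ℝ≥0∞ := fun x => ∫⁻ y in Ioc (0 : ℝ) x, ∫⁻ z in Ioi y, ⨆ i, law i (Iic (-z))
    with hI
  have hJle : ∀ x, (∫⁻ y in Ioc (0 : ℝ) x, ∫⁻ z in Ioi y, μ (Iic (-z))) ≤ C * I x := by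
    intro x
    rw [hI, ← lintegral_const_mul' _ _ hCtop]
    refine lintegral_mono fun y => ?_
    rw [← lintegral_const_mul' _ _ hCtop]
    exact lintegral_mono fun z => hupp _
  have hJge : ∀ x, c * I x ≤ ∫⁻ y in Ioc (0 : ℝ) x, ∫⁻ z in Ioi y, μ (Iic (-z)) := by
    intro x
    rw [hI, ← lintegral_const_mul' _ _ hctop]
    refine lintegral_mono fun y => ?_
    rw [← lintegral_const_mul' _ _ hctop]
    exact lintegral_mono fun z => hlow _
  -- denominator comparisons
  have hDle : ∀ x, TOden μ x ≤ (1 + C) * (1 + I x) := by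
    intro x
    rw [TOden]
    calc 1 + (∫⁻ y in Ioc (0 : ℝ) x, ∫⁻ z in Ioi y, μ (Iic (-z))) ≤ 1 + C * I x :=
      add_le_add_right (hJle x) 1
    _ ≤ (1 + C) * 1 + (1 + C) * I x :=
      add_le_add (by simp) (mul_le_mul_left le_add_self _)
    _ = (1 + C) * (1 + I x) := (mul_add _ _ _).symm
  set m : ℝ≥0∞ := min 1 c with hm
  have hm0 : m ≠ 0 := (lt_min zero_lt_one hc0.bot_lt).ne'
  have hmtop : m ≠ ⊤ := ((min_le_left _ _).trans_lt ENNReal.one_lt_top).ne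
  have hDge : ∀ x, m * (1 + I x) ≤ TOden μ x := by
    intro x
    rw [TOden, mul_add, mul_one]
    exact add_le_add (min_le_left _ _)
      ((mul_le_mul_left (min_le_right _ _) _).trans (hJge x))
  -- pointwise integrand comparisons
  have hfg : ∀ x, (ENNReal.ofReal x * μ (Ici x)) / TOden μ x ≤
      (C / m) * ((ENNReal.ofReal x * ⨆ i, law i (Ici x)) / (1 + I x)) := by
    intro x
    refine ennreal_div_le_aux ?_ (hDge x) hm0 hmtop
    calc ENNReal.ofReal x * μ (Ici x) ≤ ENNReal.ofReal x * (C * ⨆ i, law i (Ici x)) :=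
      mul_le_mul_right (hupp _) _
    _ = C * (ENNReal.ofReal x * ⨆ i, law i (Ici x)) := by ring
  have h1C0 : (1 + C) ≠ 0 := by simp
  have h1Ctop : (1 + C) ≠ ⊤ := by
    simp [ENNReal.add_ne_top, hCtop]
  have hgf : ∀ x, (ENNReal.ofReal x * ⨆ i, law i (Ici x)) / (1 + I x) ≤
      (c⁻¹ / (1 + C)⁻¹) * ((ENNReal.ofReal x * μ (Ici x)) / TOden μ x) := by
    intro x
    refine ennreal_div_le_aux ?_ ?_ (ENNReal.inv_ne_zero.mpr h1Ctop)
      (ENNReal.inv_ne_top.mpr h1C0)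
    · have h1 : c * (ENNReal.ofReal x * ⨆ i, law i (Ici x)) ≤
          ENNReal.ofReal x * μ (Ici x) := by
        calc c * (ENNReal.ofReal x * ⨆ i, law i (Ici x))
            = ENNReal.ofReal x * (c * ⨆ i, law i (Ici x)) := by ring
        _ ≤ ENNReal.ofReal x * μ (Ici x) := mul_le_mul_right (hlow _) _
      calc ENNReal.ofReal x * ⨆ i, law i (Ici x)
          = c⁻¹ * (c * (ENNReal.ofReal x * ⨆ i, law i (Ici x))) := by
            rw [← mul_assoc, ENNReal.inv_mul_cancel hc0 hctop, one_mul]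
      _ ≤ c⁻¹ * (ENNReal.ofReal x * μ (Ici x)) := mul_le_mul_right h1 _
    · calc (1 + C)⁻¹ * TOden μ x ≤ (1 + C)⁻¹ * ((1 + C) * (1 + I x)) :=
        mul_le_mul_right (hDle x) _
      _ = 1 + I x := by rw [← mul_assoc, ENNReal.inv_mul_cancel h1C0 h1Ctop, one_mul]
  constructor
  · intro h
    exact lintegral_lt_top_of_le
      (ENNReal.div_lt_top (ENNReal.inv_ne_top.mpr hc0) (ENNReal.inv_ne_zero.mpr h1Ctop)).ne
      hgf h
  · intro h
    exact lintegral_lt_top_of_le (ENNReal.div_lt_top hCtop hm0).ne hfg h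

lemma TOmaxAt_all {E : Type*} [Fintype E] (law : E → Measure ℝ)
    (hlaw : ∀ i, IsProbabilityMeasure (law i)) {κ κ' : ℝ} (h : TOmaxAt law κ)
    (hκ' : 0 < κ') : TOmaxAt law κ' := by
  rcases le_or_gt κ κ' with hle | hlt
  · exact lt_of_le_of_lt (lintegral_mono_set (Ioi_subset_Ioi hle)) h
  · unfold TOmaxAt at h ⊢
    rw [← Ioc_union_Ioi_eq_Ioi hlt.le,
      lintegral_union measurableSet_Ioi (Ioc_disjoint_Ioi le_rfl)]
    refine ENNReal.add_lt_top.mpr ⟨?_, h⟩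
    calc (∫⁻ x in Ioc κ' κ,
        (ENNReal.ofReal x * ⨆ i, law i (Ici x)) /
          (1 + ∫⁻ y in Ioc (0 : ℝ) x, ∫⁻ z in Ioi y, ⨆ i, law i (Iic (-z))))
        ≤ ∫⁻ _ in Ioc κ' κ, ENNReal.ofReal κ := by
          refine setLIntegral_mono measurable_const fun x hx => ?_
          calc (ENNReal.ofReal x * ⨆ i, law i (Ici x)) /
              (1 + ∫⁻ y in Ioc (0 : ℝ) x, ∫⁻ z in Ioi y, ⨆ i, law i (Iic (-z)))
              ≤ (ENNReal.ofReal x * ⨆ i, law i (Ici x)) / 1 :=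
                ENNReal.div_le_div le_rfl le_self_add
          _ = ENNReal.ofReal x * ⨆ i, law i (Ici x) := by rw [div_one]
          _ ≤ ENNReal.ofReal x * 1 := by
              refine mul_le_mul_right (iSup_le fun i => ?_) _
              haveI := hlaw i
              exact prob_le_one
          _ = ENNReal.ofReal x := mul_one _
          _ ≤ ENNReal.ofReal κ := ENNReal.ofReal_le_ofReal hx.2
    _ = ENNReal.ofReal κ * volume (Ioc κ' κ) := setLIntegral_const _ _
    _ < ⊤ := ENNReal.mul_lt_top ENNReal.ofReal_lt_top
        (by rw [Real.volume_Ioc]; exact ENNReal.ofReal_lt_top)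

/-- For probability measures `Π_i` and weights `ρ_i > 0`, the measure `Σ_i ρ_i·Π_i`
satisfies (TO) iff for some (equivalently, every) `κ > 0` the max-tail integral
condition holds at level `κ`. -/
theorem TO_sum_iff_max {E : Type*} [Fintype E] [Nonempty E] (law : E → Measure ℝ)
    (hlaw : ∀ i, IsProbabilityMeasure (law i)) (ρ : E → ℝ) (hρ : ∀ i, 0 < ρ i) :
    (TO (∑ i, ENNReal.ofReal (ρ i) • law i) ↔ ∃ κ > (0 : ℝ), TOmaxAt law κ) ∧
    (TO (∑ i, ENNReal.ofReal (ρ i) • law i) ↔ ∀ κ > (0 : ℝ), TOmaxAt law κ) := by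
  have key : ∀ κ, TOat (∑ i, ENNReal.ofReal (ρ i) • law i) κ ↔ TOmaxAt law κ :=
    TOat_iff_TOmaxAt law ρ hρ
  refine ⟨⟨fun ⟨κ, hκ, h⟩ => ⟨κ, hκ, (key κ).mp h⟩,
    fun ⟨κ, hκ, h⟩ => ⟨κ, hκ, (key κ).mpr h⟩⟩, ?_, ?_⟩
  · rintro ⟨κ, hκ, h⟩ κ' hκ'
    exact TOmaxAt_all law hlaw ((key κ).mp h) hκ'
  · intro h
    exact ⟨1, one_pos, (key 1).mpr (h 1 one_pos)⟩
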